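/- For the barrier-relaxed 1D contact dynamics obtained by replacing the constraint ν := x_o⁺ − x_a⁺ − r ≥ 0 with the penalty −κ log ν (κ > 0) in the objective (1/2)k(x_a⁺ − u)² + (m/2δt²)(x_o⁺ − x_o)², the resulting smoothed next object state x_o⁺(u) is a strictly increasing, continuously differentiable function of u on all of ℝ. -/

import Mathlib

noncomputable def OneDPusher.sfun (α κ d : ℝ) : ℝ :=
  (-d + Real.sqrt (d ^ 2 + 4 * α * κ)) / (2 * α)

namespace OneDPusher

lemma sqrt_sq_eq (α κ d : ℝ) (hα : 0 < α) (hκ : 0 < κ) :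
    Real.sqrt (d ^ 2 + 4 * α * κ) ^ 2 = d ^ 2 + 4 * α * κ :=
  Real.sq_sqrt (by positivity)

lemma sfun_pos (α κ d : ℝ) (hα : 0 < α) (hκ : 0 < κ) : 0 < sfun α κ d := by
  have hS := sqrt_sq_eq α κ d hα hκ
  have hS0 : 0 ≤ Real.sqrt (d ^ 2 + 4 * α * κ) := Real.sqrt_nonneg _
  have : 0 < -d + Real.sqrt (d ^ 2 + 4 * α * κ) := by nlinarith
  exact div_pos this (by linarith)

lemma sfun_eq (α κ d : ℝ) (hα : 0 < α) (hκ : 0 < κ) :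
    α * (sfun α κ d) ^ 2 + d * sfun α κ d = κ := by
  have hS := sqrt_sq_eq α κ d hα hκ
  unfold sfun
  field_simp
  rw [show α * 4 * κ = 4 * α * κ by ring]
  nlinarith [hS]

lemma sfun_anti (α κ : ℝ) (hα : 0 < α) (hκ : 0 < κ) : StrictAnti (sfun α κ) := by
  intro d₂ d₁ h
  have hS1 := sqrt_sq_eq α κ d₁ hα hκ
  have hS2 := sqrt_sq_eq α κ d₂ hα hκ
  have h10 : 0 ≤ Real.sqrt (d₁ ^ 2 + 4 * α * κ) := Real.sqrt_nonneg _
  have h20 : 0 ≤ Real.sqrt (d₂ ^ 2 + 4 * α * κ) := Real.sqrt_nonneg _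
  have hgt1 : d₁ < Real.sqrt (d₁ ^ 2 + 4 * α * κ) := by nlinarith
  have hgt2 : d₂ < Real.sqrt (d₂ ^ 2 + 4 * α * κ) := by nlinarith
  have key : -d₁ + Real.sqrt (d₁ ^ 2 + 4 * α * κ) <
      -d₂ + Real.sqrt (d₂ ^ 2 + 4 * α * κ) := by
    by_contra hcon
    push_neg at hcon
    set S₁ := Real.sqrt (d₁ ^ 2 + 4 * α * κ)
    set S₂ := Real.sqrt (d₂ ^ 2 + 4 * α * κ)
    have p1 : 0 < (d₁ - d₂) * (S₁ - d₁) := mul_pos (by linarith) (by linarith)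
    have p2 : 0 < (d₁ - d₂) * (S₂ - d₂) := mul_pos (by linarith) (by linarith)
    have p3 : 0 ≤ ((-d₁ + S₁) - (-d₂ + S₂)) * (S₁ + S₂) :=
      mul_nonneg (by linarith) (by linarith)
    nlinarith [p1, p2, p3]
  unfold OneDPusher.sfun
  have h2α : 0 < 2 * α := by linarith
  exact div_lt_div_of_pos_right key h2α

lemma sfun_contDiff (α κ : ℝ) (hα : 0 < α) (hκ : 0 < κ) :
    ContDiff ℝ 1 (sfun α κ) := by
  have h1 : ContDiff ℝ 1 (fun d : ℝ => Real.sqrt (d ^ 2 + 4 * α * κ)) := by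
    rw [contDiff_iff_contDiffAt]
    intro d
    exact ContDiffAt.sqrt (by fun_prop) (by positivity)
  have : ContDiff ℝ 1 (fun d : ℝ => (-d + Real.sqrt (d ^ 2 + 4 * α * κ)) / (2 * α)) :=
    ((contDiff_id.neg).add h1).div_const _
  exact this

/-- core optimality lemma -/
lemma min_lemma (k c s u xo r κ : ℝ) (hk : 0 < k) (hc : 0 < c) (hs : 0 < s)
    (hκ : 0 < κ) (A B : ℝ) (hA : k * (A - u) = -s) (hB : 2 * c * (B - xo) = s)
    (hν : s * (B - A - r) = κ) (a b : ℝ) (hp : r < b - a) :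
    (1/2) * k * (A - u) ^ 2 + c * (B - xo) ^ 2 - κ * Real.log (B - A - r) ≤
    (1/2) * k * (a - u) ^ 2 + c * (b - xo) ^ 2 - κ * Real.log (b - a - r) ∧
    ((1/2) * k * (a - u) ^ 2 + c * (b - xo) ^ 2 - κ * Real.log (b - a - r) ≤
     (1/2) * k * (A - u) ^ 2 + c * (B - xo) ^ 2 - κ * Real.log (B - A - r) →
     a = A ∧ b = B) := by
  have hν0 : 0 < B - A - r := by
    rcases lt_trichotomy (B - A - r) 0 with h | h | h
    · nlinarith
    · nlinarith
    · exact h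
  have hνp : 0 < b - a - r := by linarith
  have hlog1 : Real.log ((b - a - r) / (B - A - r)) ≤ (b - a - r) / (B - A - r) - 1 :=
    Real.log_le_sub_one_of_pos (div_pos hνp hν0)
  rw [Real.log_div hνp.ne' hν0.ne'] at hlog1
  have hlog2 : κ * Real.log (b - a - r) - κ * Real.log (B - A - r) ≤
      s * ((b - a) - (B - A)) := by
    have h2 : κ * ((b - a - r) / (B - A - r) - 1) = s * ((b - a) - (B - A)) := by
      rw [← hν]
      field_simp
      ring
    have h3 := mul_le_mul_of_nonneg_left hlog1 hκ.le
    calc κ * Real.log (b - a - r) - κ * Real.log (B - A - r)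
        = κ * (Real.log (b - a - r) - Real.log (B - A - r)) := by ring
      _ ≤ κ * ((b - a - r) / (B - A - r) - 1) := h3
      _ = s * ((b - a) - (B - A)) := h2
  have h1 : (1/2) * k * (a - u) ^ 2 - (1/2) * k * (A - u) ^ 2 =
      (1/2) * k * (a - A) ^ 2 - s * (a - A) := by linear_combination (a - A) * hA
  have h2 : c * (b - xo) ^ 2 - c * (B - xo) ^ 2 =
      c * (b - B) ^ 2 + s * (b - B) := by linear_combination (b - B) * hB
  have hsq1 : 0 ≤ (1/2) * k * (a - A) ^ 2 := by positivity
  have hsq2 : 0 ≤ c * (b - B) ^ 2 := by positivity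
  constructor
  · linarith
  · intro hle
    have hzero : (1/2) * k * (a - A) ^ 2 + c * (b - B) ^ 2 ≤ 0 := by linarith
    have ha : (a - A) ^ 2 = 0 := by
      have h1 : k * (a - A) ^ 2 ≤ 0 := by linarith
      have h2 : 0 ≤ k * (a - A) ^ 2 := by positivity
      exact (mul_eq_zero.mp (le_antisymm h1 h2)).resolve_left hk.ne'
    have hb : (b - B) ^ 2 = 0 := by
      have h1 : c * (b - B) ^ 2 ≤ 0 := by linarith
      have h2 : 0 ≤ c * (b - B) ^ 2 := by positivity
      exact (mul_eq_zero.mp (le_antisymm h1 h2)).resolve_left hc.ne'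
    constructor
    · have := pow_eq_zero_iff (n := 2) (by norm_num) |>.mp ha
      linarith [sub_eq_zero.mp this]
    · have := pow_eq_zero_iff (n := 2) (by norm_num) |>.mp hb
      linarith [sub_eq_zero.mp this]

end OneDPusher

/-- Barrier-relaxed 1D contact dynamics: replacing the constraint
`ν := x_o⁺ − x_a⁺ − r ≥ 0` with the penalty `−κ log ν` in the objective
`(1/2)k(x_a⁺ − u)² + (m/(2δt²))(x_o⁺ − x_o)²` yields a smoothed next object state
`u ↦ x_o⁺(u)` that is a strictly increasing, continuously differentiable
function of `u` on all of ℝ. -/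
theorem one_d_pusher_smoothed_dynamics (k m δt r κ xo : ℝ)
    (hk : 0 < k) (hm : 0 < m) (hδt : 0 < δt) (hr : 0 < r) (hκ : 0 < κ) :
    ∃ g : ℝ → ℝ × ℝ,
      (∀ u : ℝ,
        r < (g u).2 - (g u).1 ∧
        (∀ p : ℝ × ℝ, r < p.2 - p.1 →
          (1 / 2) * k * ((g u).1 - u) ^ 2 + (m / (2 * δt ^ 2)) * ((g u).2 - xo) ^ 2
            - κ * Real.log ((g u).2 - (g u).1 - r) ≤
          (1 / 2) * k * (p.1 - u) ^ 2 + (m / (2 * δt ^ 2)) * (p.2 - xo) ^ 2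
            - κ * Real.log (p.2 - p.1 - r)) ∧
        (∀ p : ℝ × ℝ, r < p.2 - p.1 →
          (1 / 2) * k * (p.1 - u) ^ 2 + (m / (2 * δt ^ 2)) * (p.2 - xo) ^ 2
            - κ * Real.log (p.2 - p.1 - r) ≤
          (1 / 2) * k * ((g u).1 - u) ^ 2 + (m / (2 * δt ^ 2)) * ((g u).2 - xo) ^ 2
            - κ * Real.log ((g u).2 - (g u).1 - r) →
          p = g u)) ∧
      StrictMono (fun u => (g u).2) ∧
      ContDiff ℝ 1 (fun u => (g u).2) := by
  set c : ℝ := m / (2 * δt ^ 2) with hc_def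
  have hc : 0 < c := by positivity
  set α : ℝ := 1 / (2 * c) + 1 / k with hα_def
  have hα : 0 < α := by positivity
  set s : ℝ → ℝ := fun u => OneDPusher.sfun α κ (xo - u - r) with hs_def
  have hspos : ∀ u, 0 < s u := fun u => OneDPusher.sfun_pos α κ _ hα hκ
  have hseq : ∀ u, α * (s u) ^ 2 + (xo - u - r) * s u = κ :=
    fun u => OneDPusher.sfun_eq α κ _ hα hκ
  refine ⟨fun u => (u - s u / k, xo + s u / (2 * c)), fun u => ?_, ?_, ?_⟩
  · have hs := hspos u
    have hA : k * ((u - s u / k) - u) = -(s u) := by field_simp; ring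
    have hB : 2 * c * ((xo + s u / (2 * c)) - xo) = s u := by field_simp; ring
    have hν : s u * ((xo + s u / (2 * c)) - (u - s u / k) - r) = κ := by
      have h := hseq u
      have : (xo + s u / (2 * c)) - (u - s u / k) - r = (xo - u - r) + α * s u := by
        rw [hα_def]; field_simp; ring
      rw [this]; nlinarith [h]
    have key := fun (a b : ℝ) (hp : r < b - a) =>
      OneDPusher.min_lemma k c (s u) u xo r κ hk hc hs hκ _ _ hA hB hν a b hp
    refine ⟨?_, fun p hp => (key p.1 p.2 hp).1, fun p hp hle => ?_⟩
    · have hν0 : 0 < (xo + s u / (2 * c)) - (u - s u / k) - r := by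
        rcases lt_trichotomy ((xo + s u / (2 * c)) - (u - s u / k) - r) 0 with h | h | h
        · nlinarith
        · nlinarith
        · exact h
      show r < (xo + s u / (2 * c)) - (u - s u / k)
      linarith [hν0]
    · obtain ⟨h1, h2⟩ := (key p.1 p.2 hp).2 hle
      exact Prod.ext h1 h2
  · intro u₁ u₂ h
    have hlt : s u₁ < s u₂ := OneDPusher.sfun_anti α κ hα hκ (by linarith)
    have h2c : 0 < 2 * c := by linarith
    show xo + s u₁ / (2 * c) < xo + s u₂ / (2 * c)
    have := div_lt_div_of_pos_right hlt h2c
    linarith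
  · have hs1 : ContDiff ℝ 1 (fun u : ℝ => xo - u - r) := by fun_prop
    have := (OneDPusher.sfun_contDiff α κ hα hκ).comp hs1
    exact contDiff_const.add (this.div_const _)
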